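/- For every real x one has Λ(x) ≤ Λ(π/6), i.e. the Lobachevsky function attains its maximum over ℝ at π/6; moreover Λ(π/6) = (3/2)·Λ(π/3). Consequently |Λ(x)| ≤ (3/2)Λ(π/3) for all real x. -/

import Mathlib

open Real

/-- The Lobachevsky function `Λ(x) = -∫₀ˣ log|2 sin t| dt`. -/
noncomputable def lob (x : ℝ) : ℝ := -∫ t in (0:ℝ)..x, Real.log |2 * Real.sin t|

open MeasureTheory intervalIntegral Set

noncomputable def f (t : ℝ) : ℝ := Real.log |2 * Real.sin t|

lemma f_even (t : ℝ) : f (-t) = f t := by simp [f, abs_mul]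

lemma f_periodic : Function.Periodic f π := by
  intro t; simp [f, Real.sin_add_pi, abs_mul]

lemma f_reflect (t : ℝ) : f (π - t) = f t := by simp [f, Real.sin_pi_sub]

lemma f_meas : Measurable f :=
  Real.measurable_log.comp ((continuous_abs.comp (by continuity : Continuous fun t : ℝ => 2 * Real.sin t)).measurable)

/-- `log` is interval integrable on `[0, 1]`. -/
lemma intInt_log01 : IntegrableOn Real.log (Ioc (0:ℝ) 1) volume := by
  have h : IntegrableOn (fun x : ℝ => -Real.log x) (Ioc (0:ℝ) 1) volume := by
    apply integrableOn_deriv_of_nonneg (g := fun x : ℝ => x - x * Real.log x)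
    · apply ContinuousOn.sub continuousOn_id
      have := Real.continuous_mul_log.continuousOn (s := Icc (0:ℝ) 1)
      simpa using this
    · intro x hx
      have h1 : HasDerivAt (fun x : ℝ => x * Real.log x) (Real.log x + 1) x := by
        simpa using Real.hasDerivAt_mul_log (ne_of_gt hx.1)
      exact ((hasDerivAt_id' x).sub h1).congr_deriv (by ring)
    · intro x hx
      simp only [neg_nonneg]
      exact Real.log_nonpos (le_of_lt hx.1) (le_of_lt hx.2)
  have h2 : Integrable (fun x : ℝ => Real.log x) (volume.restrict (Ioc (0:ℝ) 1)) := by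
    exact (by simpa [Pi.neg_def, neg_neg] using h.neg : IntegrableOn (fun x : ℝ => Real.log x) (Ioc (0:ℝ) 1) volume)
  exact h2

lemma intOn_log (b : ℝ) : IntegrableOn Real.log (Ioc (0:ℝ) b) volume := by
  rcases le_or_gt b 1 with hb | hb
  · exact intInt_log01.mono_set (Ioc_subset_Ioc_right hb)
  · have h2 : IntegrableOn Real.log (Ioc (1:ℝ) b) volume := by
      have hc : ContinuousOn Real.log (Icc (1:ℝ) b) :=
        Real.continuousOn_log.mono (fun x hx => by intro h; rw [mem_singleton_iff] at h; subst h; linarith [hx.1])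
      exact hc.integrableOn_Icc.mono_set Ioc_subset_Icc_self
    have : Ioc (0:ℝ) b = Ioc 0 1 ∪ Ioc 1 b := (Ioc_union_Ioc_eq_Ioc zero_le_one hb.le).symm
    rw [this]
    exact intInt_log01.union h2

lemma intOn_log_lin (c b : ℝ) (hc : 0 < c) :
    IntegrableOn (fun t => Real.log (c * t)) (Ioc (0:ℝ) b) volume := by
  have h0 : IntegrableOn (fun t : ℝ => Real.log c + Real.log t) (Ioc (0:ℝ) b) volume :=
    (integrable_const _).add (intOn_log b)
  exact h0.congr_fun (fun t ht => (Real.log_mul hc.ne' ht.1.ne').symm) measurableSet_Ioc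

lemma f_int_half : IntervalIntegrable f volume 0 (π/2) := by
  rw [intervalIntegrable_iff_integrableOn_Ioc_of_le (by positivity)]
  have hg : IntegrableOn (fun t => |Real.log (2*t)| + |Real.log ((4/π)*t)|) (Ioc (0:ℝ) (π/2)) volume :=
    ((intOn_log_lin 2 (π/2) (by norm_num)).abs).add ((intOn_log_lin (4/π) (π/2) (by positivity)).abs)
  apply hg.mono' (f_meas.aestronglyMeasurable)
  rw [ae_restrict_iff' measurableSet_Ioc]
  filter_upwards with t ht
  obtain ⟨ht0, ht2⟩ := ht
  have hsin : 0 < Real.sin t := Real.sin_pos_of_pos_of_lt_pi ht0 (by linarith [Real.pi_pos])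
  have habs : |2 * Real.sin t| = 2 * Real.sin t := abs_of_pos (by linarith)
  have hlow : Real.log ((4/π) * t) ≤ f t := by
    rw [f, habs]
    apply Real.log_le_log (by positivity)
    have := Real.mul_le_sin ht0.le ht2
    calc 4/π*t = 2*(2/π*t) := by ring
    _ ≤ 2 * Real.sin t := by linarith
  have hhigh : f t ≤ Real.log (2 * t) := by
    rw [f, habs]
    exact Real.log_le_log (by positivity) (by linarith [Real.sin_lt ht0])
  have h1 := le_abs_self (Real.log (2*t))
  have h2 := neg_abs_le (Real.log ((4/π)*t))
  have h3 := abs_nonneg (Real.log (2*t))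
  have h4 := abs_nonneg (Real.log ((4/π)*t))
  rw [Real.norm_eq_abs, abs_le]
  constructor <;> linarith

lemma f_int_0pi : IntervalIntegrable f volume 0 π := by
  apply f_int_half.trans
  have h := f_int_half.comp_sub_left π
  have : (fun x => f (π - x)) = f := funext f_reflect
  rw [this] at h
  simpa [sub_half] using h.symm

lemma II_congr {g : ℝ → ℝ} {a b a' b' : ℝ} (h : IntervalIntegrable g volume a b)
    (ha : a' = a) (hb : b' = b) : IntervalIntegrable g volume a' b' := by
  rw [ha, hb]; exact h

lemma f_int (a b : ℝ) : IntervalIntegrable f volume a b := by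
  have hpiece : ∀ n : ℤ, IntervalIntegrable f volume (n*π) (n*π + π) := by
    intro n
    have h := f_int_0pi.comp_add_right (-(n*π))
    have he : (fun x => f (x + -(n*π))) = f := by
      funext x
      have := (f_periodic.int_mul n).sub_eq x
      simpa [sub_eq_add_neg] using this
    rw [he] at h
    have e1 : (0:ℝ) - -(n*π) = n*π := by ring
    have e2 : π - -(n*π) = n*π + π := by ring
    rwa [e1, e2] at h
  have hmain : ∀ n : ℕ, IntervalIntegrable f volume (-(n*π)) (n*π + π) := by
    intro n
    induction n with
    | zero => simpa using hpiece 0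
    | succ n ih =>
      have h1 : IntervalIntegrable f volume (-(((n+1:ℕ)):ℝ)*π) (-((n:ℕ)*π)) :=
        II_congr (hpiece (-(n+1) : ℤ)) (by push_cast; ring) (by push_cast; ring)
      have h2 : IntervalIntegrable f volume ((n:ℕ)*π + π) (((n+1:ℕ):ℝ)*π + π) :=
        II_congr (hpiece ((n+1) : ℤ)) (by push_cast; ring) (by push_cast; ring)
      exact II_congr ((h1.trans ih).trans h2) (by push_cast; ring) rfl
  obtain ⟨n, hn⟩ := exists_nat_ge (max |a| |b| / π)
  have hπ := Real.pi_pos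
  have hn' : max |a| |b| ≤ n * π := by
    rw [div_le_iff₀ hπ] at hn; linarith
  have ha := (abs_le.mp ((le_max_left |a| |b|).trans hn'))
  have hb := (abs_le.mp ((le_max_right |a| |b|).trans hn'))
  apply (hmain n).mono_set
  rw [Set.uIcc_of_le (by nlinarith : -((n:ℝ)*π) ≤ (n:ℝ)*π + π)]
  intro x hx
  rcases Set.mem_uIcc.mp hx with ⟨h1, h2⟩ | ⟨h1, h2⟩ <;>
    exact ⟨by nlinarith, by nlinarith⟩

lemma f_int_shift (a b c : ℝ) : IntervalIntegrable (fun t => f (t + c)) volume a b := by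
  have h := (f_int (a+c) (b+c)).comp_add_right c
  simpa using h

lemma keyid (x : ℝ) :
    (2:ℝ)⁻¹ * ∫ t in (0:ℝ)..(2*x), f t =
      (∫ t in (0:ℝ)..x, f t) + ∫ t in (π/2)..(x+π/2), f t := by
  have h1 : ∫ t in (0:ℝ)..x, f (2*t) = (2:ℝ)⁻¹ • ∫ t in (0:ℝ)..(2*x), f t := by
    have := intervalIntegral.integral_comp_mul_left (a := (0:ℝ)) (b := x) (c := 2) f two_ne_zero
    simpa using this
  have hnull : ∀ᵐ t : ℝ, Real.sin (2*t) ≠ 0 := by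
    rw [ae_iff]
    refine measure_mono_null ?_ ((Set.countable_range (fun n : ℤ => (n:ℝ)*π/2)).measure_zero _)
    intro t ht
    simp only [Set.mem_setOf_eq, not_not] at ht
    obtain ⟨n, hn⟩ := Real.sin_eq_zero_iff.mp ht
    exact ⟨n, by linarith⟩
  have h2 : ∫ t in (0:ℝ)..x, f (2*t) = ∫ t in (0:ℝ)..x, (f t + f (t + π/2)) := by
    apply intervalIntegral.integral_congr_ae
    filter_upwards [hnull] with t ht _
    have h2s : Real.sin (2*t) = 2 * Real.sin t * Real.cos t := Real.sin_two_mul t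
    have hs : Real.sin t ≠ 0 := fun h => ht (by rw [h2s, h]; ring)
    have hc : Real.cos t ≠ 0 := fun h => ht (by rw [h2s, h]; ring)
    have : (2:ℝ) * Real.sin (2*t) = (2*Real.sin t) * (2*Real.cos t) := by
      rw [h2s]; ring
    rw [f, f, f, this, abs_mul, Real.log_mul (by simpa using hs) (by simpa using hc),
      Real.sin_add_pi_div_two]
  have h3 : ∫ t in (0:ℝ)..x, (f t + f (t + π/2)) =
      (∫ t in (0:ℝ)..x, f t) + ∫ t in (0:ℝ)..x, f (t + π/2) :=
    intervalIntegral.integral_add (f_int 0 x) (f_int_shift 0 x (π/2))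
  have h4 : ∫ t in (0:ℝ)..x, f (t + π/2) = ∫ t in (π/2)..(x+π/2), f t := by
    have := intervalIntegral.integral_comp_add_right (a := (0:ℝ)) (b := x) f (π/2)
    simpa using this
  rw [← smul_eq_mul, ← h1, h2, h3, h4]

lemma int0pi : ∫ t in (0:ℝ)..π, f t = 0 := by
  have h := keyid (π/2)
  rw [show 2*(π/2) = π from by ring, show π/2 + π/2 = π from by ring] at h
  have h2 := intervalIntegral.integral_add_adjacent_intervals (f_int 0 (π/2)) (f_int (π/2) π)
  linarith

lemma lob_def (x : ℝ) : lob x = -∫ t in (0:ℝ)..x, f t := rfl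

lemma lob_reflect (x : ℝ) : lob (π - x) = -lob x := by
  have h1 : ∫ t in (0:ℝ)..x, f (π - t) = ∫ t in (π - x)..π, f t := by
    have := intervalIntegral.integral_comp_sub_left (a := (0:ℝ)) (b := x) f π
    simpa using this
  have h2 : (∫ t in (0:ℝ)..x, f (π - t)) = ∫ t in (0:ℝ)..x, f t := by
    apply intervalIntegral.integral_congr
    intro t _
    exact f_reflect t
  have h3 := intervalIntegral.integral_add_adjacent_intervals (f_int 0 (π - x)) (f_int (π - x) π)
  rw [int0pi] at h3
  rw [lob_def, lob_def]
  rw [h2] at h1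
  linarith

lemma lob_pi2 : lob (π/2) = 0 := by
  have := lob_reflect (π/2)
  rw [show π - π/2 = π/2 from by ring] at this
  linarith

lemma lob_odd (x : ℝ) : lob (-x) = -lob x := by
  have h1 : ∫ t in (0:ℝ)..x, f (-t) = ∫ t in (-x)..(0:ℝ), f t := by
    have := intervalIntegral.integral_comp_neg (a := (0:ℝ)) (b := x) f
    simpa using this
  have h2 : (∫ t in (0:ℝ)..x, f (-t)) = ∫ t in (0:ℝ)..x, f t := by
    apply intervalIntegral.integral_congr
    intro t _
    exact f_even t
  have h3 : (∫ t in (-x)..(0:ℝ), f t) = -∫ t in (0:ℝ)..(-x), f t :=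
    intervalIntegral.integral_symm _ _
  rw [lob_def, lob_def]
  rw [h2, h3] at h1
  linarith

lemma lob_periodic : Function.Periodic lob π := by
  intro x
  have h1 := intervalIntegral.integral_add_adjacent_intervals (f_int 0 x) (f_int x (x+π))
  have h2 : ∫ t in x..(x+π), f t = ∫ t in (0:ℝ)..(0+π), f t :=
    f_periodic.intervalIntegral_add_eq x 0
  rw [zero_add, int0pi] at h2
  rw [lob_def, lob_def, ← h1, h2, add_zero]

lemma lob_dup : lob (π/6) = (3/2) * lob (π/3) := by
  have h := keyid (π/6)
  rw [show 2*(π/6) = π/3 from by ring, show π/6 + π/2 = 2*π/3 from by ring] at h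
  have h2 := intervalIntegral.integral_add_adjacent_intervals (f_int 0 (π/2)) (f_int (π/2) (2*π/3))
  have h3 : lob (2*π/3) = -lob (π/3) := by
    have := lob_reflect (π/3)
    rw [show π - π/3 = 2*π/3 from by ring] at this
    linarith
  have e1 := lob_def (π/6)
  have e2 := lob_def (π/3)
  have e3 := lob_def (π/2)
  have e4 := lob_def (2*π/3)
  rw [lob_pi2] at e3
  linarith

lemma int_nonpos {a b : ℝ} {g : ℝ → ℝ} (hab : a ≤ b) (h : ∀ u ∈ Icc a b, g u ≤ 0) :
    (∫ t in a..b, g t) ≤ 0 := by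
  have h2 := intervalIntegral.integral_nonneg (μ := volume) (f := fun t => -g t) hab
    (fun u hu => neg_nonneg.mpr (h u hu))
  rw [intervalIntegral.integral_neg] at h2
  linarith

lemma f_nonpos {t : ℝ} (h0 : 0 ≤ t) (h6 : t ≤ π/6) : f t ≤ 0 := by
  have hπ := Real.pi_pos
  apply Real.log_nonpos (abs_nonneg _)
  have hs : Real.sin t ≤ 1/2 := by
    rw [← Real.sin_pi_div_six]
    exact Real.sin_le_sin_of_le_of_le_pi_div_two (by linarith) (by linarith) h6
  have hs0 : 0 ≤ Real.sin t := Real.sin_nonneg_of_nonneg_of_le_pi h0 (by linarith)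
  rw [abs_of_nonneg (by linarith)]
  linarith

lemma f_nonneg {t : ℝ} (h1 : π/6 ≤ t) (h2 : t ≤ 5*π/6) : 0 ≤ f t := by
  have hπ := Real.pi_pos
  have hs : 1/2 ≤ Real.sin t := by
    rcases le_total t (π/2) with h | h
    · rw [← Real.sin_pi_div_six]
      exact Real.sin_le_sin_of_le_of_le_pi_div_two (by linarith) h h1
    · rw [← Real.sin_pi_sub, ← Real.sin_pi_div_six]
      exact Real.sin_le_sin_of_le_of_le_pi_div_two (by linarith) (by linarith) (by linarith)
  apply Real.log_nonneg
  rw [abs_of_nonneg (by linarith)]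
  linarith

lemma lob_nonneg_small {y : ℝ} (h0 : 0 ≤ y) (h6 : y ≤ π/6) : 0 ≤ lob y := by
  rw [lob_def, neg_nonneg]
  apply int_nonpos h0
  intro u hu
  exact f_nonpos hu.1 (hu.2.trans h6)

lemma lob_le_max_of_Icc {y : ℝ} (h0 : 0 ≤ y) (hπ' : y ≤ π) : lob y ≤ lob (π/6) := by
  have hπ := Real.pi_pos
  rcases le_total y (π/6) with h | h
  · have key : lob (π/6) - lob y = -∫ t in y..(π/6), f t := by
      have := intervalIntegral.integral_add_adjacent_intervals (f_int 0 y) (f_int y (π/6))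
      rw [lob_def, lob_def]; linarith
    have hint : (∫ t in y..(π/6), f t) ≤ 0 := by
      apply int_nonpos h
      intro u hu
      exact f_nonpos (h0.trans hu.1) hu.2
    linarith
  · rcases le_total y (5*π/6) with h5 | h5
    · have key : lob (π/6) - lob y = ∫ t in (π/6)..y, f t := by
        have := intervalIntegral.integral_add_adjacent_intervals (f_int 0 (π/6)) (f_int (π/6) y)
        rw [lob_def, lob_def]; linarith
      have hint : 0 ≤ ∫ t in (π/6)..y, f t := by
        apply intervalIntegral.integral_nonneg h
        intro u hu
        exact f_nonneg hu.1 (hu.2.trans h5)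
      linarith
    · have h1 : lob y = -lob (π - y) := by
        have := lob_reflect (π - y)
        rw [show π - (π - y) = y from by ring] at this
        linarith
      have h2 : 0 ≤ lob (π - y) := lob_nonneg_small (by linarith) (by linarith)
      have h3 : 0 ≤ lob (π/6) := lob_nonneg_small (by positivity) (le_refl _)
      linarith

lemma lob_le_max (x : ℝ) : lob x ≤ lob (π/6) := by
  have hπ := Real.pi_pos
  set y := x - ⌊x / π⌋ * π with hy
  have h0 : 0 ≤ y := Int.sub_floor_div_mul_nonneg x hπ
  have h1 : y < π := Int.sub_floor_div_mul_lt x hπ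
  have h2 : lob y = lob x := (lob_periodic.sub_int_mul_eq ⌊x / π⌋)
  rw [← h2]
  exact lob_le_max_of_Icc h0 h1.le

/-- The Lobachevsky function attains its maximum over `ℝ` at `π/6`, where
`Λ(π/6) = (3/2)Λ(π/3)`; consequently `|Λ(x)| ≤ (3/2)Λ(π/3)` for all `x`. -/
theorem stmt12 :
    (∀ x : ℝ, lob x ≤ lob (π/6)) ∧
      lob (π/6) = (3/2) * lob (π/3) ∧
      ∀ x : ℝ, |lob x| ≤ (3/2) * lob (π/3) := by
  refine ⟨lob_le_max, lob_dup, fun x => ?_⟩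
  rw [← lob_dup, abs_le]
  constructor
  · have h := lob_le_max (-x)
    rw [lob_odd] at h
    linarith
  · exact lob_le_max x
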